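/- arXiv:1804.08518 — 3 statements merged into one kernel-verified Lean document; each statement's English description precedes it below -/
import Mathlib

section
/- Let T and H be bounded operators on a Hilbert space with T strictly positive (positive and invertible). If T - H H* is strictly positive, then the operator H* T⁻¹ H is a strict contraction, and hence I - H* T⁻¹ H is strictly positive (in particular invertible). -/
open ContinuousLinearMap RCLike

set_option maxHeartbeats 1000000

local notation "⟪" x ", " y "⟫_ℂ" => @inner ℂ _ _ x y

section Aux

variable {H : Type*} [NormedAddCommGroup H] [InnerProductSpace ℂ H] [CompleteSpace H]



/-- Cauchy–Schwarz style lower bound for a positive invertible operator. -/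
lemma aux_lower (S S' : H →L[ℂ] H) (hS : S.IsPositive) (h1 : S ∘L S' = 1) (x : H) :
    ‖x‖ ^ 2 ≤ ‖S'‖ * re ⟪S x, x⟫_ℂ := by
  have hsymm : ∀ u v : H, ⟪S u, v⟫_ℂ = ⟪u, S v⟫_ℂ :=
    hS.1
  let c : PreInnerProductSpace.Core ℂ H :=
    { inner := fun u v => ⟪S u, v⟫_ℂ
      conj_inner_symm := fun u v => by
        simpa [hsymm] using (inner_conj_symm (S v) u)
      re_inner_nonneg := fun u => hS.2 u
      add_left := fun u v w => by simp [inner_add_left]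
      smul_left := fun u v r => by simp [inner_smul_left, mul_comm] }
  have hCS := @InnerProductSpace.Core.inner_mul_inner_self_le ℂ H _ _ _ c (S' x) x
  have hSS' : S (S' x) = x := by
    have := ContinuousLinearMap.ext_iff.mp h1 x
    simpa using this
  -- unfold the core inner product
  have hCS' : ‖⟪S (S' x), x⟫_ℂ‖ * ‖⟪S x, S' x⟫_ℂ‖ ≤
      re ⟪S (S' x), S' x⟫_ℂ * re ⟪S x, x⟫_ℂ := hCS
  rw [hSS'] at hCS'
  have h2 : ⟪S x, S' x⟫_ℂ = ⟪x, x⟫_ℂ := by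
    rw [hsymm, hSS']
  have h3 : ‖⟪x, x⟫_ℂ‖ = ‖x‖ ^ 2 := by
    rw [inner_self_eq_norm_sq_to_K]
    simp [pow_two]
  rw [h2, h3] at hCS'
  have h4 : re ⟪x, S' x⟫_ℂ ≤ ‖S'‖ * ‖x‖ ^ 2 := by
    calc re ⟪x, S' x⟫_ℂ ≤ ‖⟪x, S' x⟫_ℂ‖ := RCLike.re_le_norm _
      _ ≤ ‖x‖ * ‖S' x‖ := norm_inner_le_norm _ _
      _ ≤ ‖x‖ * (‖S'‖ * ‖x‖) := by
          gcongr; exact S'.le_opNorm x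
      _ = ‖S'‖ * ‖x‖ ^ 2 := by ring
  have h5 : re ⟪x, S' x⟫_ℂ = re ⟪S (S' x), S' x⟫_ℂ := by rw [hSS']
  rcases eq_or_ne x 0 with hx | hx
  · simp [hx]
  · have hxn : (0:ℝ) < ‖x‖ := norm_pos_iff.mpr hx
    have hx2 : (0:ℝ) < ‖x‖ ^ 2 := by positivity
    have hre : (0:ℝ) ≤ re ⟪S x, x⟫_ℂ := hS.2 x
    nlinarith [hCS', h4, h5, norm_nonneg S']

end Aux

/-- If `T` is strictly positive and `T - H₀ H₀*` is strictly positive, then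
`H₀* T⁻¹ H₀` is a strict contraction, hence `I - H₀* T⁻¹ H₀` is strictly positive. -/
theorem stmt2 {H K : Type*} [NormedAddCommGroup H] [InnerProductSpace ℂ H]
    [CompleteSpace H] [NormedAddCommGroup K] [InnerProductSpace ℂ K] [CompleteSpace K]
    (T T' : H →L[ℂ] H) (H₀ : K →L[ℂ] H)
    (hTpos : T.IsPositive) (hT1 : T ∘L T' = 1) (hT2 : T' ∘L T = 1)
    (hpos : (T - H₀ ∘L H₀.adjoint).IsPositive)
    (hinv : ∃ S : H →L[ℂ] H, (T - H₀ ∘L H₀.adjoint) ∘L S = 1 ∧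
      S ∘L (T - H₀ ∘L H₀.adjoint) = 1) :
    ‖H₀.adjoint ∘L T' ∘L H₀‖ < 1 ∧
      (1 - H₀.adjoint ∘L T' ∘L H₀).IsPositive ∧
      ∃ V : K →L[ℂ] K, (1 - H₀.adjoint ∘L T' ∘L H₀) ∘L V = 1 ∧
        V ∘L (1 - H₀.adjoint ∘L T' ∘L H₀) = 1 := by
  classical
  set A : K →L[ℂ] K := H₀.adjoint ∘L T' ∘L H₀ with hAdef
  -- T' is self-adjoint
  have hTsa : IsSelfAdjoint T := hTpos.isSelfAdjoint
  have hT'sa : IsSelfAdjoint T' := by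
    have h1 : T' * T = 1 := hT2
    have h2 : T * T' = 1 := hT1
    have h3 : T * star T' = 1 := by
      have := congrArg star h1
      rwa [star_mul, star_one, hTsa.star_eq] at this
    have : T' = star T' := left_inv_eq_right_inv h1 h3
    exact this.symm
  -- T' is positive
  have hTsymm : ∀ u v : H, ⟪T u, v⟫_ℂ = ⟪u, T v⟫_ℂ :=
    isSelfAdjoint_iff_isSymmetric.mp hTsa
  have hTT' : ∀ x : H, T (T' x) = x := fun x => by
    have := ContinuousLinearMap.ext_iff.mp hT1 x; simpa using this
  have hT'pos : T'.IsPositive := by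
    refine ⟨isSelfAdjoint_iff_isSymmetric.mp hT'sa, fun x => ?_⟩
    have : ⟪T' x, x⟫_ℂ = ⟪T (T' x), T' x⟫_ℂ := by
      conv_lhs => rw [← hTT' x]
      rw [hTsymm]
      rw [hTT' x]
    have h := hTpos.2 (T' x)
    unfold ContinuousLinearMap.reApplyInnerSelf at h ⊢
    rw [this]
    exact h
  have hApos : A.IsPositive := hT'pos.adjoint_conj H₀
  -- norm bound
  have hAsa : IsSelfAdjoint A := hApos.isSelfAdjoint
  obtain ⟨S', hS'1, hS'2⟩ := hinv
  set S : H →L[ℂ] H := T - H₀ ∘L H₀.adjoint with hSdef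
  have hnorm : ‖A‖ < 1 := by
    rcases subsingleton_or_nontrivial H with hH | hH
    · have hH₀ : H₀ = 0 := Subsingleton.elim _ _
      have : A = 0 := by rw [hAdef, hH₀]; ext x; simp
      rw [this]; norm_num
    · -- ‖T‖ > 0 and ‖S'‖ > 0
      have hone : (1 : H →L[ℂ] H) ≠ 0 := by
        intro h
        obtain ⟨x, hx⟩ := exists_ne (0 : H)
        have : (1 : H →L[ℂ] H) x = 0 := by rw [h]; rfl
        exact hx (by simpa using this)
      have hTne : T ≠ 0 := fun h => hone (by rw [← hT1, h]; ext x; simp)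
      have hS'ne : S' ≠ 0 := fun h => hone (by rw [← hS'1, h]; ext x; simp)
      have hTpos' : (0:ℝ) < ‖T‖ := norm_pos_iff.mpr hTne
      have hS'pos : (0:ℝ) < ‖S'‖ := norm_pos_iff.mpr hS'ne
      set k : ℝ := 1 - 1 / (‖S'‖ * ‖T‖) with hk
      have hklt : k < 1 := by
        rw [hk]
        have : 0 < 1 / (‖S'‖ * ‖T‖) := by positivity
        linarith
      set M : ℝ := max k 0 with hM
      have hMlt : M < 1 := max_lt hklt one_pos
      have hMnn : (0:ℝ) ≤ M := le_max_right _ _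
      have hbound : ∀ x : K, ‖A x‖ ≤ M * ‖x‖ := by
        intro x
        set z : H := T' (H₀ x) with hz
        have hTz : T z = H₀ x := hTT' (H₀ x)
        have hAx : A x = H₀.adjoint z := rfl
        -- lower bound for S at z
        have hlow : ‖z‖ ^ 2 ≤ ‖S'‖ * re ⟪S z, z⟫_ℂ := aux_lower S S' hpos hS'1 z
        -- re ⟪S z, z⟫_ℂ = re ⟪T z, z⟫_ℂ - ‖H₀† z‖²
        have hSz : re ⟪S z, z⟫_ℂ = re ⟪T z, z⟫_ℂ - ‖H₀.adjoint z‖ ^ 2 := by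
          have : ⟪S z, z⟫_ℂ = ⟪T z, z⟫_ℂ - ⟪H₀.adjoint z, H₀.adjoint z⟫_ℂ := by
            rw [hSdef]
            simp only [ContinuousLinearMap.sub_apply, ContinuousLinearMap.comp_apply,
              inner_sub_left]
            rw [← adjoint_inner_right H₀]
          rw [this, map_sub, inner_self_eq_norm_sq]
        -- re ⟪T z, z⟫_ℂ ≤ ‖T‖ ‖z‖²
        have hup : re ⟪T z, z⟫_ℂ ≤ ‖T‖ * ‖z‖ ^ 2 := by
          calc re ⟪T z, z⟫_ℂ ≤ ‖⟪T z, z⟫_ℂ‖ := RCLike.re_le_norm _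
            _ ≤ ‖T z‖ * ‖z‖ := norm_inner_le_norm _ _
            _ ≤ (‖T‖ * ‖z‖) * ‖z‖ := by gcongr; exact T.le_opNorm z
            _ = ‖T‖ * ‖z‖ ^ 2 := by ring
        -- re ⟪T z, z⟫_ℂ = re ⟪x, A x⟫_ℂ ≤ ‖A x‖ ‖x‖, and ≥ 0
        have hTz0 : (0:ℝ) ≤ re ⟪T z, z⟫_ℂ := hTpos.2 z
        have hTzAx : re ⟪T z, z⟫_ℂ ≤ ‖A x‖ * ‖x‖ := by
          have : ⟪T z, z⟫_ℂ = ⟪x, A x⟫_ℂ := by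
            rw [hTz, hAx, ← adjoint_inner_right H₀]
          rw [this]
          calc re ⟪x, A x⟫_ℂ ≤ ‖⟪x, A x⟫_ℂ‖ := RCLike.re_le_norm _
            _ ≤ ‖x‖ * ‖A x‖ := norm_inner_le_norm _ _
            _ = ‖A x‖ * ‖x‖ := by ring
        -- combine: ‖A x‖² ≤ k * re⟪Tz,z⟫_ℂ
        have hcomb : ‖A x‖ ^ 2 ≤ k * re ⟪T z, z⟫_ℂ := by
          have h1 : ‖A x‖ ^ 2 ≤ re ⟪T z, z⟫_ℂ - ‖z‖ ^ 2 / ‖S'‖ := by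
            rw [hAx]
            have := hlow
            rw [hSz] at this
            have hdiv : ‖z‖ ^ 2 / ‖S'‖ ≤ re ⟪T z, z⟫_ℂ - ‖H₀.adjoint z‖ ^ 2 := by
              rw [div_le_iff₀ hS'pos]
              nlinarith [this]
            linarith
          have h2 : re ⟪T z, z⟫_ℂ / ‖T‖ ≤ ‖z‖ ^ 2 := by
            rw [div_le_iff₀ hTpos']
            nlinarith
          have h3 : ‖z‖ ^ 2 / ‖S'‖ ≥ re ⟪T z, z⟫_ℂ / (‖S'‖ * ‖T‖) := by
            rw [ge_iff_le, div_le_div_iff₀ (by positivity) hS'pos]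
            nlinarith
          rw [hk]
          have : re ⟪T z, z⟫_ℂ / (‖S'‖ * ‖T‖) = (1 / (‖S'‖ * ‖T‖)) * re ⟪T z, z⟫_ℂ := by
            ring
          nlinarith
        have hcomb' : ‖A x‖ ^ 2 ≤ M * (‖A x‖ * ‖x‖) := by
          calc ‖A x‖ ^ 2 ≤ k * re ⟪T z, z⟫_ℂ := hcomb
            _ ≤ M * re ⟪T z, z⟫_ℂ := by
                apply mul_le_mul_of_nonneg_right (le_max_left _ _) hTz0
            _ ≤ M * (‖A x‖ * ‖x‖) := by
                apply mul_le_mul_of_nonneg_left hTzAx hMnn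
        rcases eq_or_lt_of_le (norm_nonneg (A x)) with h0 | h0
        · rw [← h0]; positivity
        · nlinarith
      calc ‖A‖ ≤ M := A.opNorm_le_bound hMnn hbound
        _ < 1 := hMlt
  refine ⟨hnorm, ?_, ?_⟩
  · -- 1 - A is positive
    refine ⟨isSelfAdjoint_iff_isSymmetric.mp ((IsSelfAdjoint.one (K →L[ℂ] K)).sub hAsa), fun x => ?_⟩
    unfold ContinuousLinearMap.reApplyInnerSelf
    simp only [ContinuousLinearMap.sub_apply, ContinuousLinearMap.one_apply, inner_sub_left,
      map_sub]
    rw [inner_self_eq_norm_sq]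
    have h1 : re ⟪A x, x⟫_ℂ ≤ ‖A x‖ * ‖x‖ := by
      calc re ⟪A x, x⟫_ℂ ≤ ‖⟪A x, x⟫_ℂ‖ := RCLike.re_le_norm _
        _ ≤ ‖A x‖ * ‖x‖ := norm_inner_le_norm _ _
    have h2 : ‖A x‖ ≤ ‖x‖ := by
      calc ‖A x‖ ≤ ‖A‖ * ‖x‖ := A.le_opNorm x
        _ ≤ 1 * ‖x‖ := mul_le_mul_of_nonneg_right hnorm.le (norm_nonneg x)
        _ = ‖x‖ := one_mul _
    nlinarith [norm_nonneg x, norm_nonneg (A x)]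
  · -- invertibility
    refine ⟨(Units.oneSub A hnorm).inv, ?_, ?_⟩
    · have := (Units.oneSub A hnorm).val_inv
      simpa [ContinuousLinearMap.mul_def] using this
    · have := (Units.oneSub A hnorm).inv_val
      simpa [ContinuousLinearMap.mul_def] using this
end

section
/- Let T be a strictly positive bounded operator on a Hilbert space H and let H₀ : K → H be bounded. If I - H₀* T⁻¹ H₀ is positive and invertible, then T⁻¹ᐟ² H₀ is a strict contraction and consequently T - H₀ H₀* is strictly positive. -/
open ContinuousLinearMap RCLike
open scoped InnerProduct ComplexInnerProductSpace

private lemma pos_cs {K : Type*} [NormedAddCommGroup K] [InnerProductSpace ℂ K] [CompleteSpace K]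
    {B : K →L[ℂ] K} (hB : B.IsPositive) (u v : K) :
    (re ⟪B u, v⟫)^2 ≤ re ⟪B u, u⟫ * re ⟪B v, v⟫ := by
  have hsymm := hB.1
  have hsym : ∀ x y : K, re ⟪B x, y⟫ = re ⟪B y, x⟫ := by
    intro x y
    rw [inner_re_symm]
    exact congrArg re (hsymm y x).symm
  have key : ∀ t : ℝ, 0 ≤ re ⟪B v, v⟫ * (t * t) + (2 * re ⟪B u, v⟫) * t
      + re ⟪B u, u⟫ := by
    intro t
    have h0 := hB.2 (u + (t : ℂ) • v)
    rw [reApplyInnerSelf] at h0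
    simp only [map_add, map_smul, inner_add_left, inner_add_right, inner_smul_left,
      inner_smul_right, Complex.conj_ofReal, RCLike.re_to_complex, Complex.add_re, Complex.mul_re,
      Complex.ofReal_re, Complex.ofReal_im, Complex.add_im, zero_mul, sub_zero] at h0
    have hs := hsym u v
    simp only [RCLike.re_to_complex] at hs ⊢
    rw [← hs] at h0
    ring_nf at h0 ⊢
    linarith [h0]
  have hd := discrim_le_zero key
  rw [discrim] at hd
  nlinarith [hd]

/-- If `1 - A† A` is positive and invertible then `A` is a strict contraction. -/
private lemma contraction {H K : Type*} [NormedAddCommGroup H] [InnerProductSpace ℂ H]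
    [CompleteSpace H] [NormedAddCommGroup K] [InnerProductSpace ℂ K] [CompleteSpace K]
    (A : K →L[ℂ] H) (hpos : (1 - adjoint A ∘L A).IsPositive)
    (V : K →L[ℂ] K) (hV1 : (1 - adjoint A ∘L A) ∘L V = 1) : ‖A‖ < 1 := by
  rcases subsingleton_or_nontrivial K with hK | hK
  · have hA0 : A = 0 := by
      ext x
      rw [Subsingleton.elim x 0]
      simp
    rw [hA0]
    norm_num
  · set B : K →L[ℂ] K := 1 - adjoint A ∘L A with hB
    have hq : ∀ x : K, re ⟪B x, x⟫ = ‖x‖^2 - ‖A x‖^2 := by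
      intro x
      have h1 : ⟪(adjoint A ∘L A) x, x⟫ = ⟪A x, A x⟫ := by
        rw [comp_apply, adjoint_inner_left]
      rw [hB, sub_apply, ContinuousLinearMap.one_apply, inner_sub_left, map_sub, h1,
        inner_self_eq_norm_sq, inner_self_eq_norm_sq]
    set M : ℝ := ‖B‖ * ‖V‖^2 with hMdef
    have hM0 : 0 ≤ M := by rw [hMdef]; positivity
    have hM : ∀ x : K, (‖x‖^2) * (‖x‖^2) ≤ M * (‖x‖^2 * re ⟪B x, x⟫) := by
      intro x
      have h1 := pos_cs hpos (V x) x
      have h2 : re ⟪B (V x), x⟫ = ‖x‖^2 := by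
        have hx : B (V x) = x := by rw [← comp_apply, hV1, ContinuousLinearMap.one_apply]
        rw [hx, inner_self_eq_norm_sq]
      have h3 : re ⟪B (V x), V x⟫ ≤ M * ‖x‖^2 := by
        calc re ⟪B (V x), V x⟫ ≤ ‖(⟪B (V x), V x⟫ : ℂ)‖ := RCLike.re_le_norm _
          _ ≤ ‖B (V x)‖ * ‖V x‖ := norm_inner_le_norm _ _
          _ ≤ (‖B‖ * ‖V x‖) * ‖V x‖ :=
              mul_le_mul_of_nonneg_right (le_opNorm _ _) (norm_nonneg _)
          _ = ‖B‖ * (‖V x‖ * ‖V x‖) := by ring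
          _ ≤ ‖B‖ * ((‖V‖ * ‖x‖) * (‖V‖ * ‖x‖)) := by
              have c4 : ‖V x‖ ≤ ‖V‖ * ‖x‖ := le_opNorm _ _
              have c7 : ‖V x‖ * ‖V x‖ ≤ (‖V‖ * ‖x‖) * (‖V‖ * ‖x‖) :=
                mul_le_mul c4 c4 (norm_nonneg _) (by positivity)
              exact mul_le_mul_of_nonneg_left c7 (norm_nonneg _)
          _ = M * ‖x‖^2 := by rw [hMdef]; ring
      have h4 : 0 ≤ re ⟪B x, x⟫ := hpos.2 x
      have h5 : re ⟪B (V x), V x⟫ * re ⟪B x, x⟫ ≤ (M * ‖x‖^2) * re ⟪B x, x⟫ :=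
        mul_le_mul_of_nonneg_right h3 h4
      calc (‖x‖^2) * (‖x‖^2) = (re ⟪B (V x), x⟫)^2 := by rw [h2]; ring
        _ ≤ re ⟪B (V x), V x⟫ * re ⟪B x, x⟫ := h1
        _ ≤ (M * ‖x‖^2) * re ⟪B x, x⟫ := h5
        _ = M * (‖x‖^2 * re ⟪B x, x⟫) := by ring
    obtain ⟨x₀, hx₀⟩ := exists_ne (0 : K)
    have hx₀n : 0 < ‖x₀‖ := norm_pos_iff.mpr hx₀
    have hM1 : 1 ≤ M := by
      have h5 := hM x₀
      rw [hq x₀] at h5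
      have h7 : 0 ≤ ‖A x₀‖^2 := sq_nonneg _
      have hX : (0:ℝ) < ‖x₀‖^2 * ‖x₀‖^2 := by positivity
      have h8 : M * (‖x₀‖^2 * (‖x₀‖^2 - ‖A x₀‖^2)) ≤ M * (‖x₀‖^2 * ‖x₀‖^2) := by
        apply mul_le_mul_of_nonneg_left _ hM0
        nlinarith [mul_nonneg (sq_nonneg ‖x₀‖) h7]
      have h9 : ‖x₀‖^2 * ‖x₀‖^2 ≤ M * (‖x₀‖^2 * ‖x₀‖^2) := le_trans h5 h8
      exact le_of_mul_le_mul_right (by linarith) hX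
    have hMpos : 0 < M := by linarith
    have hfrac : 0 ≤ 1 - 1/M := by
      rw [sub_nonneg, div_le_one hMpos]
      linarith
    have hbound : ∀ x : K, ‖A x‖ ≤ Real.sqrt (1 - 1/M) * ‖x‖ := by
      intro x
      by_cases hx : x = 0
      · simp [hx]
      · have hxn : 0 < ‖x‖ := norm_pos_iff.mpr hx
        have h5 := hM x
        rw [hq x] at h5
        have key : M * ‖A x‖^2 ≤ (M - 1) * ‖x‖^2 := by
          nlinarith [h5, pow_pos hxn 2]
        have h6 : ‖A x‖^2 ≤ (1 - 1/M) * ‖x‖^2 := by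
          have hrw : (1 - 1/M) * ‖x‖^2 = (M - 1) * ‖x‖^2 / M := by
            field_simp
          rw [hrw, le_div_iff₀ hMpos]
          linarith [key]
        calc ‖A x‖ = Real.sqrt (‖A x‖^2) := (Real.sqrt_sq (norm_nonneg _)).symm
          _ ≤ Real.sqrt ((1 - 1/M) * ‖x‖^2) := Real.sqrt_le_sqrt h6
          _ = Real.sqrt (1 - 1/M) * ‖x‖ := by
              rw [Real.sqrt_mul hfrac, Real.sqrt_sq (norm_nonneg _)]
    have hnorm : ‖A‖ ≤ Real.sqrt (1 - 1/M) := opNorm_le_bound A (Real.sqrt_nonneg _) hbound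
    have hlt : Real.sqrt (1 - 1/M) < 1 := by
      have h8 : 1 - 1/M < 1 := by
        have : 0 < 1/M := by positivity
        linarith
      have := Real.sqrt_lt_sqrt hfrac h8
      rwa [Real.sqrt_one] at this
    linarith


private lemma oneSub_AAadj_pos {H K : Type*} [NormedAddCommGroup H] [InnerProductSpace ℂ H]
    [CompleteSpace H] [NormedAddCommGroup K] [InnerProductSpace ℂ K] [CompleteSpace K]
    (A : K →L[ℂ] H) (hA : ‖A‖ < 1) :
    ((1 : H →L[ℂ] H) - A ∘L adjoint A).IsPositive ∧ ‖A ∘L adjoint A‖ < 1 := by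
  have hadj_bound : ∀ x : H, ‖(adjoint A) x‖ ≤ ‖A‖ * ‖x‖ := by
    intro x
    have h1 : ‖(adjoint A) x‖^2 = re ⟪(A ∘L adjoint A) x, x⟫ := by
      have h2 := apply_norm_sq_eq_inner_adjoint_left (adjoint A) x
      rwa [adjoint_adjoint] at h2
    by_cases h0 : ‖(adjoint A) x‖ = 0
    · rw [h0]; positivity
    · have hpos0 : 0 < ‖(adjoint A) x‖ := (norm_nonneg _).lt_of_ne (Ne.symm h0)
      have h2 : re ⟪(A ∘L adjoint A) x, x⟫ ≤ ‖A‖ * ‖(adjoint A) x‖ * ‖x‖ := by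
        calc re ⟪(A ∘L adjoint A) x, x⟫ ≤ ‖(⟪(A ∘L adjoint A) x, x⟫ : ℂ)‖ :=
              RCLike.re_le_norm _
          _ ≤ ‖(A ∘L adjoint A) x‖ * ‖x‖ := norm_inner_le_norm _ _
          _ ≤ (‖A‖ * ‖(adjoint A) x‖) * ‖x‖ := by
              apply mul_le_mul_of_nonneg_right _ (norm_nonneg _)
              rw [comp_apply]
              exact le_opNorm _ _
          _ = ‖A‖ * ‖(adjoint A) x‖ * ‖x‖ := by ring
      rw [← h1] at h2
      apply le_of_mul_le_mul_right _ hpos0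
      have h4 : ‖(adjoint A) x‖ * ‖(adjoint A) x‖ = ‖(adjoint A) x‖^2 := (sq _).symm
      linarith [h2, h4]
  constructor
  · constructor
    · have htsa : IsSelfAdjoint (A ∘L adjoint A) := by
        rw [IsSelfAdjoint, star_eq_adjoint, adjoint_comp, adjoint_adjoint]
      exact isSelfAdjoint_iff_isSymmetric.mp ((IsSelfAdjoint.one _).sub htsa)
    · intro x
      rw [reApplyInnerSelf, sub_apply, ContinuousLinearMap.one_apply, inner_sub_left, map_sub,
        inner_self_eq_norm_sq]
      have h1 : ‖(adjoint A) x‖^2 = re ⟪(A ∘L adjoint A) x, x⟫ := by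
        have h2 := apply_norm_sq_eq_inner_adjoint_left (adjoint A) x
        rwa [adjoint_adjoint] at h2
      rw [← h1]
      have h3 : ‖(adjoint A) x‖ ≤ ‖A‖ * ‖x‖ := hadj_bound x
      have h5 : ‖(adjoint A) x‖^2 ≤ (‖A‖ * ‖x‖)^2 := pow_le_pow_left₀ (norm_nonneg _) h3 2
      have h7 : ‖A‖^2 ≤ 1 := by nlinarith [hA, norm_nonneg A]
      have h6 : (‖A‖ * ‖x‖)^2 ≤ ‖x‖^2 := by nlinarith [h7, sq_nonneg ‖x‖]
      linarith [h5, h6]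
  · have hbd : ∀ x : H, ‖(A ∘L adjoint A) x‖ ≤ (‖A‖ * ‖A‖) * ‖x‖ := by
      intro x
      rw [comp_apply]
      calc ‖A ((adjoint A) x)‖ ≤ ‖A‖ * ‖(adjoint A) x‖ := le_opNorm _ _
        _ ≤ ‖A‖ * (‖A‖ * ‖x‖) := mul_le_mul_of_nonneg_left (hadj_bound x) (norm_nonneg _)
        _ = (‖A‖ * ‖A‖) * ‖x‖ := by ring
    have h2 : ‖A ∘L adjoint A‖ ≤ ‖A‖ * ‖A‖ := opNorm_le_bound _ (by positivity) hbd
    nlinarith [norm_nonneg A, hA, h2]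

private lemma conj_pos_inv {H : Type*} [NormedAddCommGroup H] [InnerProductSpace ℂ H]
    [CompleteSpace H] (T S S' t : H →L[ℂ] H)
    (hS1m : S * S' = 1) (hS2m : S' * S = 1) (hSa : adjoint S = S)
    (hCpos : ((1 : H →L[ℂ] H) - t).IsPositive) (ht : ‖t‖ < 1)
    (hfact : T = S * ((1 - t) * S)) :
    T.IsPositive ∧ ∃ U : H →L[ℂ] H, T * U = 1 ∧ U * T = 1 := by
  constructor
  · rw [hfact]
    have h := hCpos.conj_adjoint S
    rw [hSa] at h
    exact h
  · set W : H →L[ℂ] H := ((↑(Units.oneSub t ht)⁻¹ : H →L[ℂ] H)) with hW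
    have hCW : (1 - t) * W = 1 := (Units.oneSub t ht).mul_inv
    have hWC : W * (1 - t) = 1 := (Units.oneSub t ht).inv_mul
    refine ⟨S' * (W * S'), ?_, ?_⟩
    · rw [hfact]
      calc (S * ((1 - t) * S)) * (S' * (W * S'))
          = S * ((1 - t) * ((S * S') * (W * S'))) := by simp only [mul_assoc]
        _ = S * ((1 - t) * (W * S')) := by rw [hS1m, one_mul]
        _ = S * (((1 - t) * W) * S') := by rw [mul_assoc]
        _ = S * S' := by rw [hCW, one_mul]
        _ = 1 := hS1m
    · rw [hfact]
      calc (S' * (W * S')) * (S * ((1 - t) * S))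
          = S' * (W * ((S' * S) * ((1 - t) * S))) := by simp only [mul_assoc]
        _ = S' * (W * ((1 - t) * S)) := by rw [hS2m, one_mul]
        _ = S' * ((W * (1 - t)) * S) := by rw [mul_assoc]
        _ = S' * S := by rw [hWC, one_mul]
        _ = 1 := hS2m

/-- If `T` is strictly positive with positive square root `S` (so `S S = T`), and
`I - H₀* T⁻¹ H₀` is positive and invertible, then `T^{-1/2} H₀ = S⁻¹ H₀` is a strict
contraction and consequently `T - H₀ H₀*` is strictly positive. -/
theorem stmt3 {H K : Type*} [NormedAddCommGroup H] [InnerProductSpace ℂ H]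
    [CompleteSpace H] [NormedAddCommGroup K] [InnerProductSpace ℂ K] [CompleteSpace K]
    (T T' S S' : H →L[ℂ] H) (H₀ : K →L[ℂ] H)
    (hTpos : T.IsPositive) (hT1 : T ∘L T' = 1) (hT2 : T' ∘L T = 1)
    (hSpos : S.IsPositive) (hSsq : S ∘L S = T) (hS1 : S ∘L S' = 1) (hS2 : S' ∘L S = 1)
    (hpos : (1 - H₀.adjoint ∘L T' ∘L H₀).IsPositive)
    (hinv : ∃ V : K →L[ℂ] K, (1 - H₀.adjoint ∘L T' ∘L H₀) ∘L V = 1 ∧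
      V ∘L (1 - H₀.adjoint ∘L T' ∘L H₀) = 1) :
    ‖S' ∘L H₀‖ < 1 ∧
      (T - H₀ ∘L H₀.adjoint).IsPositive ∧
      ∃ U : H →L[ℂ] H, (T - H₀ ∘L H₀.adjoint) ∘L U = 1 ∧
        U ∘L (T - H₀ ∘L H₀.adjoint) = 1 := by
  obtain ⟨V, hV1, hV2⟩ := hinv
  have hSa : adjoint S = S := isSelfAdjoint_iff'.mp hSpos.isSelfAdjoint
  have hS1m : S * S' = 1 := hS1
  have hS2m : S' * S = 1 := hS2
  have hT2m : T' * T = 1 := hT2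
  have hSsqm : S * S = T := hSsq
  -- `S'` is self-adjoint
  have hS'a : adjoint S' = S' := by
    have h0 : adjoint (1 : H →L[ℂ] H) = 1 := by rw [← star_eq_adjoint, star_one]
    have h1 : adjoint S' * S = 1 := by
      have h2 := congrArg adjoint hS1
      rw [adjoint_comp, hSa, h0] at h2
      exact h2
    calc adjoint S' = adjoint S' * 1 := (mul_one _).symm
      _ = adjoint S' * (S * S') := by rw [hS1m]
      _ = (adjoint S' * S) * S' := (mul_assoc _ _ _).symm
      _ = S' := by rw [h1, one_mul]
  -- `T' = S' * S'`
  have hT'm : T' = S' * S' := by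
    have h1 : T * (S' * S') = 1 := by
      rw [← hSsqm]
      calc (S * S) * (S' * S') = S * ((S * S') * S') := by simp only [mul_assoc]
        _ = 1 := by rw [hS1m, one_mul, hS1m]
    calc T' = T' * (T * (S' * S')) := by rw [h1, mul_one]
      _ = (T' * T) * (S' * S') := (mul_assoc _ _ _).symm
      _ = S' * S' := by rw [hT2m, one_mul]
  have hAadj : adjoint (S' ∘L H₀) = adjoint H₀ ∘L S' := by
    rw [adjoint_comp, hS'a]
  have hBeq : (1 : K →L[ℂ] K) - H₀.adjoint ∘L T' ∘L H₀
      = 1 - adjoint (S' ∘L H₀) ∘L (S' ∘L H₀) := by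
    congr 1
    rw [hAadj, hT'm]
    show adjoint H₀ ∘L ((S' ∘L S') ∘L H₀) = (adjoint H₀ ∘L S') ∘L (S' ∘L H₀)
    simp only [comp_assoc]
  rw [hBeq] at hpos hV1
  have hA : ‖S' ∘L H₀‖ < 1 := contraction (S' ∘L H₀) hpos V hV1
  refine ⟨hA, ?_⟩
  obtain ⟨hCpos, ht⟩ := oneSub_AAadj_pos (S' ∘L H₀) hA
  have hfact : T - H₀ ∘L H₀.adjoint
      = S * ((1 - (S' ∘L H₀) ∘L adjoint (S' ∘L H₀)) * S) := by
    have ht' : (S' ∘L H₀) ∘L adjoint (S' ∘L H₀) = S' * ((H₀ ∘L H₀.adjoint) * S') := by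
      rw [hAadj]
      show (S' ∘L H₀) ∘L (adjoint H₀ ∘L S') = S' ∘L ((H₀ ∘L adjoint H₀) ∘L S')
      simp only [comp_assoc]
    rw [ht']
    have h1 : (1 - S' * ((H₀ ∘L H₀.adjoint) * S')) * S
        = S - S' * ((H₀ ∘L H₀.adjoint) * (S' * S)) := by
      simp only [sub_mul, one_mul, mul_assoc]
    rw [h1, hS2m, mul_one, mul_sub, hSsqm, ← mul_assoc, hS1m, one_mul]
  have hmain := conj_pos_inv (T - H₀ ∘L H₀.adjoint) S S'
    ((S' ∘L H₀) ∘L adjoint (S' ∘L H₀)) hS1m hS2m hSa hCpos ht hfact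
  exact ⟨hmain.1, hmain.2⟩
end

section
/- Let k ∈ L¹(ℝ₊) and define the Hankel operator H on L²(ℝ₊) by (H f)(t) = ∫₀^∞ k(t+τ) f(τ) dτ. Then H is the limit in operator norm of a sequence of finite-rank operators. -/
open MeasureTheory Set Filter

open scoped ENNReal NNReal InnerProductSpace ComplexConjugate

lemma hankel_lint_shift (g : ℝ → ℝ≥0∞) (hg : Measurable g) {t : ℝ} (ht : 0 ≤ t) :
    ∫⁻ τ in Ici (0:ℝ), g (t + τ) ≤ ∫⁻ s in Ici (0:ℝ), g s := by
  have h1 : ∫⁻ τ in Ici (0:ℝ), g (t + τ) = ∫⁻ s in Ici t, g s := by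
    rw [← lintegral_indicator measurableSet_Ici, ← lintegral_indicator measurableSet_Ici]
    have hptw : ∀ τ : ℝ, (Ici (0:ℝ)).indicator (fun τ => g (t + τ)) τ
        = (Ici t).indicator g (t + τ) := by
      intro τ
      by_cases h : (0:ℝ) ≤ τ
      · simp [Set.indicator_of_mem, h, le_add_iff_nonneg_right]
      · simp [Set.indicator_of_notMem, h, le_add_iff_nonneg_right]
    simp_rw [hptw]
    exact (measurePreserving_add_left volume t).lintegral_comp
      (hg.indicator measurableSet_Ici)
  rw [h1]
  exact lintegral_mono_set (Ici_subset_Ici.2 ht)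

lemma hankel_schur (g f : ℝ → ℂ) (hg : StronglyMeasurable g) (hgi : IntegrableOn g (Ici 0))
    (hf : StronglyMeasurable f) (hf2 : MemLp f 2 (volume.restrict (Ici (0:ℝ)))) :
    (∀ᵐ t ∂(volume.restrict (Ici (0:ℝ))), IntegrableOn (fun τ => g (t + τ) * f τ) (Ici 0)) ∧
    MemLp (fun t => ∫ τ in Ici (0:ℝ), g (t + τ) * f τ) 2 (volume.restrict (Ici (0:ℝ))) ∧
    eLpNorm (fun t => ∫ τ in Ici (0:ℝ), g (t + τ) * f τ) 2 (volume.restrict (Ici (0:ℝ)))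
      ≤ (∫⁻ s in Ici (0:ℝ), (‖g s‖₊ : ℝ≥0∞)) * eLpNorm f 2 (volume.restrict (Ici (0:ℝ))) := by
  set μ := volume.restrict (Ici (0:ℝ)) with hμ
  set G : ℝ≥0∞ := ∫⁻ s in Ici (0:ℝ), (‖g s‖₊ : ℝ≥0∞) with hG
  set Nf : ℝ≥0∞ := ∫⁻ τ, (‖f τ‖₊ : ℝ≥0∞) ^ (2:ℝ) ∂μ with hNf
  have hgm : Measurable fun s => (‖g s‖₊ : ℝ≥0∞) := hg.measurable.nnnorm.coe_nnreal_ennreal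
  have hfm : Measurable fun s => (‖f s‖₊ : ℝ≥0∞) := hf.measurable.nnnorm.coe_nnreal_ennreal
  have hGne : G ≠ ⊤ := hgi.2.ne
  have hNfne : Nf ≠ ⊤ := by
    have h2 := hf2.2
    rw [eLpNorm_eq_lintegral_rpow_enorm_toReal (by norm_num) (by norm_num)] at h2
    have : Nf ^ ((1:ℝ)/2) ≠ ⊤ := by
      simpa [hNf, ENNReal.toReal_ofNat, enorm_eq_nnnorm] using h2.ne
    intro hc
    rw [hc] at this
    simp [ENNReal.top_rpow_of_pos] at this
  set W : ℝ → ℝ≥0∞ := fun t => ∫⁻ τ in Ici (0:ℝ),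
    (‖g (t + τ)‖₊ : ℝ≥0∞) * (‖f τ‖₊ : ℝ≥0∞) ^ (2:ℝ) with hW
  have hconj : (2:ℝ).HolderConjugate 2 := Real.HolderConjugate.two_two
  -- Cauchy-Schwarz step
  have CS : ∀ t : ℝ, 0 ≤ t →
      ∫⁻ τ in Ici (0:ℝ), (‖g (t + τ)‖₊ : ℝ≥0∞) * (‖f τ‖₊ : ℝ≥0∞)
        ≤ G ^ ((1:ℝ)/2) * (W t) ^ ((1:ℝ)/2) := by
    intro t ht
    have ha : AEMeasurable (fun τ => ((‖g (t + τ)‖₊ : ℝ≥0∞)) ^ ((1:ℝ)/2)) μ :=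
      ((hgm.comp (measurable_const_add t)).pow_const _).aemeasurable
    have hb : AEMeasurable (fun τ => ((‖g (t + τ)‖₊ : ℝ≥0∞)) ^ ((1:ℝ)/2) * (‖f τ‖₊ : ℝ≥0∞)) μ :=
      (((hgm.comp (measurable_const_add t)).pow_const _).mul hfm).aemeasurable
    have key := ENNReal.lintegral_mul_le_Lp_mul_Lq μ hconj ha hb
    have h1 : ∀ τ : ℝ, ((fun τ => ((‖g (t + τ)‖₊ : ℝ≥0∞)) ^ ((1:ℝ)/2)) *
        (fun τ => ((‖g (t + τ)‖₊ : ℝ≥0∞)) ^ ((1:ℝ)/2) * (‖f τ‖₊ : ℝ≥0∞))) τ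
        = (‖g (t + τ)‖₊ : ℝ≥0∞) * (‖f τ‖₊ : ℝ≥0∞) := by
      intro τ
      simp only [Pi.mul_apply]
      rw [← mul_assoc, ← ENNReal.rpow_add_of_nonneg _ _ (by norm_num) (by norm_num)]
      norm_num
    have h2 : ∀ τ : ℝ, ((‖g (t + τ)‖₊ : ℝ≥0∞) ^ ((1:ℝ)/2)) ^ (2:ℝ)
        = (‖g (t + τ)‖₊ : ℝ≥0∞) := by
      intro τ
      rw [← ENNReal.rpow_mul]
      norm_num
    have h3 : ∀ τ : ℝ, ((‖g (t + τ)‖₊ : ℝ≥0∞) ^ ((1:ℝ)/2) * (‖f τ‖₊ : ℝ≥0∞)) ^ (2:ℝ)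
        = (‖g (t + τ)‖₊ : ℝ≥0∞) * (‖f τ‖₊ : ℝ≥0∞) ^ (2:ℝ) := by
      intro τ
      rw [ENNReal.mul_rpow_of_nonneg _ _ (by norm_num), ← ENNReal.rpow_mul]
      norm_num
    simp_rw [h1, h2, h3] at key
    refine key.trans ?_
    gcongr
    · exact hankel_lint_shift _ hgm ht
  -- measurability of W
  have hFm : Measurable fun p : ℝ × ℝ =>
      (‖g (p.1 + p.2)‖₊ : ℝ≥0∞) * (‖f p.2‖₊ : ℝ≥0∞) ^ (2:ℝ) :=
    (hgm.comp (measurable_fst.add measurable_snd)).mul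
      ((hfm.comp measurable_snd).pow_const _)
  have hWmeas : Measurable W := hFm.lintegral_prod_right'
  have hWint : ∫⁻ t, W t ∂μ ≤ G * Nf := by
    have hswap : ∫⁻ t, W t ∂μ
        = ∫⁻ τ, ∫⁻ t, (‖g (t + τ)‖₊ : ℝ≥0∞) * (‖f τ‖₊ : ℝ≥0∞) ^ (2:ℝ) ∂μ ∂μ :=
      lintegral_lintegral_swap hFm.aemeasurable
    rw [hswap]
    have hpt : ∀ᵐ τ ∂μ, ∫⁻ t, (‖g (t + τ)‖₊ : ℝ≥0∞) * (‖f τ‖₊ : ℝ≥0∞) ^ (2:ℝ) ∂μ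
        ≤ G * (‖f τ‖₊ : ℝ≥0∞) ^ (2:ℝ) := by
      filter_upwards [ae_restrict_mem measurableSet_Ici] with τ hτ
      have hm : Measurable fun t : ℝ => (‖g (t + τ)‖₊ : ℝ≥0∞) :=
        hgm.comp (measurable_add_const τ)
      rw [lintegral_mul_const _ hm]
      have : ∫⁻ t, (‖g (t + τ)‖₊ : ℝ≥0∞) ∂μ ≤ G := by
        have := hankel_lint_shift (fun s => (‖g s‖₊ : ℝ≥0∞)) hgm hτ
        simp_rw [add_comm τ _] at this
        exact this
      exact mul_le_mul_left this _
    calc ∫⁻ τ, (∫⁻ t, (‖g (t + τ)‖₊ : ℝ≥0∞) * (‖f τ‖₊ : ℝ≥0∞) ^ (2:ℝ) ∂μ) ∂μ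
        ≤ ∫⁻ τ, G * (‖f τ‖₊ : ℝ≥0∞) ^ (2:ℝ) ∂μ := lintegral_mono_ae hpt
      _ = G * Nf := lintegral_const_mul G (hfm.pow_const _)
  have hWae : ∀ᵐ t ∂μ, W t < ⊤ := by
    refine ae_lt_top hWmeas ?_
    exact (lt_of_le_of_lt hWint (ENNReal.mul_lt_top hGne.lt_top hNfne.lt_top)).ne
  -- a.e. integrability
  have hInt : ∀ᵐ t ∂μ, IntegrableOn (fun τ => g (t + τ) * f τ) (Ici 0) := by
    filter_upwards [hWae, ae_restrict_mem measurableSet_Ici] with t hWt ht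
    refine ⟨((hg.comp_measurable (measurable_const_add t)).mul hf).aestronglyMeasurable, ?_⟩
    have hlt : ∫⁻ τ, (‖g (t + τ) * f τ‖₊ : ℝ≥0∞) ∂μ < ⊤ := by
      have heq : ∫⁻ τ, (‖g (t + τ) * f τ‖₊ : ℝ≥0∞) ∂μ
          = ∫⁻ τ in Ici (0:ℝ), (‖g (t + τ)‖₊ : ℝ≥0∞) * (‖f τ‖₊ : ℝ≥0∞) := by
        simp_rw [nnnorm_mul, ENNReal.coe_mul]
        rfl
      rw [heq]
      refine lt_of_le_of_lt (CS t ht) (ENNReal.mul_lt_top ?_ ?_)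
      · exact (ENNReal.rpow_lt_top_of_nonneg (by norm_num) hGne)
      · exact (ENNReal.rpow_lt_top_of_nonneg (by norm_num) hWt.ne)
    exact hlt
  set Φ : ℝ → ℂ := fun t => ∫ τ in Ici (0:ℝ), g (t + τ) * f τ with hΦ
  have hΦm : StronglyMeasurable Φ := by
    have hjm : StronglyMeasurable fun p : ℝ × ℝ => g (p.1 + p.2) * f p.2 :=
      (hg.comp_measurable (measurable_fst.add measurable_snd)).mul
        (hf.comp_measurable measurable_snd)
    exact hjm.integral_prod_right'
  have key : ∀ t : ℝ, 0 ≤ t → (‖Φ t‖₊ : ℝ≥0∞) ^ (2:ℝ) ≤ G * W t := by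
    intro t ht
    have h1 : (‖Φ t‖₊ : ℝ≥0∞) ≤ ∫⁻ τ in Ici (0:ℝ), (‖g (t + τ)‖₊ : ℝ≥0∞) * (‖f τ‖₊ : ℝ≥0∞) := by
      refine le_trans (enorm_integral_le_lintegral_enorm _) ?_
      simp_rw [enorm_mul]
      exact le_rfl
    have h2 : (‖Φ t‖₊ : ℝ≥0∞) ≤ G ^ ((1:ℝ)/2) * (W t) ^ ((1:ℝ)/2) := h1.trans (CS t ht)
    calc (‖Φ t‖₊ : ℝ≥0∞) ^ (2:ℝ) ≤ (G ^ ((1:ℝ)/2) * (W t) ^ ((1:ℝ)/2)) ^ (2:ℝ) :=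
          ENNReal.rpow_le_rpow h2 (by norm_num)
      _ = G * W t := by
          rw [ENNReal.mul_rpow_of_nonneg _ _ (by norm_num), ← ENNReal.rpow_mul,
            ← ENNReal.rpow_mul]
          norm_num
  have main : ∫⁻ t, (‖Φ t‖₊ : ℝ≥0∞) ^ (2:ℝ) ∂μ ≤ G * (G * Nf) := by
    calc ∫⁻ t, (‖Φ t‖₊ : ℝ≥0∞) ^ (2:ℝ) ∂μ ≤ ∫⁻ t, G * W t ∂μ := by
          refine lintegral_mono_ae ?_
          filter_upwards [ae_restrict_mem measurableSet_Ici] with t ht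
          exact key t ht
      _ = G * ∫⁻ t, W t ∂μ := lintegral_const_mul G hWmeas
      _ ≤ G * (G * Nf) := mul_le_mul_right hWint G
  have hsnorm : eLpNorm Φ 2 μ = (∫⁻ t, (‖Φ t‖₊ : ℝ≥0∞) ^ (2:ℝ) ∂μ) ^ ((1:ℝ)/2) := by
    rw [eLpNorm_eq_lintegral_rpow_enorm_toReal (by norm_num) (by norm_num)]
    norm_num [enorm_eq_nnnorm]
  have hfnorm : eLpNorm f 2 μ = Nf ^ ((1:ℝ)/2) := by
    rw [eLpNorm_eq_lintegral_rpow_enorm_toReal (by norm_num) (by norm_num)]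
    norm_num [hNf, enorm_eq_nnnorm]
  have hbound : eLpNorm Φ 2 μ ≤ G * eLpNorm f 2 μ := by
    rw [hsnorm, hfnorm]
    calc (∫⁻ t, (‖Φ t‖₊ : ℝ≥0∞) ^ (2:ℝ) ∂μ) ^ ((1:ℝ)/2)
        ≤ (G * (G * Nf)) ^ ((1:ℝ)/2) := ENNReal.rpow_le_rpow main (by norm_num)
      _ = G * Nf ^ ((1:ℝ)/2) := by
          rw [← mul_assoc, ENNReal.mul_rpow_of_nonneg _ _ (by norm_num)]
          congr 1
          rw [← sq, ← ENNReal.rpow_natCast G 2, ← ENNReal.rpow_mul]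
          norm_num
  refine ⟨hInt, ⟨hΦm.aestronglyMeasurable, ?_⟩, hbound⟩
  exact lt_of_le_of_lt hbound (ENNReal.mul_lt_top hGne.lt_top hf2.2.ne.lt_top)

lemma hankel_weier (f : C(Icc (0:ℝ) 1, ℝ)) {ε : ℝ} (hε : 0 < ε) :
    ∃ p : Polynomial ℝ, ∀ x : Icc (0:ℝ) 1, |f x - p.eval ↑x| ≤ ε := by
  have h := polynomialFunctions_closure_eq_top 0 1
  have hf : f ∈ closure (polynomialFunctions (Icc (0:ℝ) 1) : Set C(Icc (0:ℝ) 1, ℝ)) := by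
    have : f ∈ (polynomialFunctions (Icc (0:ℝ) 1)).topologicalClosure := by
      rw [h]; trivial
    exact this
  rcases Metric.mem_closure_iff.1 hf ε hε with ⟨q, hq, hdist⟩
  rw [polynomialFunctions_coe] at hq
  obtain ⟨p, rfl⟩ := hq
  refine ⟨p, fun x => ?_⟩
  have h1 : dist (f x) ((Polynomial.toContinuousMapOnAlgHom (Icc (0:ℝ) 1) p) x)
      ≤ dist f (Polynomial.toContinuousMapOnAlgHom (Icc (0:ℝ) 1) p) :=
    ContinuousMap.dist_apply_le_dist x
  have h2 := h1.trans hdist.le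
  rw [Real.dist_eq] at h2
  simpa using h2

noncomputable def hankelG (g : ℝ → ℂ) : ℝ → ℂ :=
  fun x => if 0 < x then g (-Real.log x) * (x:ℂ)⁻¹ else 0

lemma hankelG_eq (g : ℝ → ℂ) {x : ℝ} (hx : 0 < x) :
    hankelG g x = g (-Real.log x) * (x:ℂ)⁻¹ := if_pos hx

lemma hankelG_cont (g : ℝ → ℂ) (hg : Continuous g) {A : ℝ} (hA : ∀ s, A ≤ s → g s = 0) :
    Continuous (hankelG g) := by
  set δ := Real.exp (-A) with hδ
  have hδ0 : 0 < δ := Real.exp_pos _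
  have hzero : ∀ x : ℝ, x < δ → hankelG g x = 0 := by
    intro x hx
    by_cases hx0 : 0 < x
    · rw [hankelG_eq g hx0]
      have : A ≤ -Real.log x := by
        have := Real.log_lt_log hx0 hx
        rw [hδ, Real.log_exp] at this
        linarith
      rw [hA _ this, zero_mul]
    · exact if_neg hx0
  rw [continuous_iff_continuousAt]
  intro x
  rcases lt_or_ge x δ with hlt | hge
  · refine (continuousAt_const (y := (0:ℂ))).congr ?_
    filter_upwards [Iio_mem_nhds hlt] with y hy
    exact (hzero y hy).symm
  · have hx0 : 0 < x := lt_of_lt_of_le hδ0 hge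
    have hca : ContinuousAt (fun x : ℝ => g (-Real.log x) * (x:ℂ)⁻¹) x := by
      refine ContinuousAt.mul ?_ ?_
      · exact hg.continuousAt.comp ((Real.continuousAt_log hx0.ne').neg)
      · exact (Complex.continuous_ofReal.continuousAt).inv₀ (by exact_mod_cast hx0.ne')
    refine hca.congr ?_
    filter_upwards [Ioi_mem_nhds hx0] with y hy
    exact (hankelG_eq g hy).symm

lemma hankel_exp_int (j : ℕ) :
    IntegrableOn (fun s : ℝ => Complex.exp (↑(-((j:ℝ)+1) * s))) (Ici 0) := by
  rw [integrableOn_Ici_iff_integrableOn_Ioi]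
  have hre : IntegrableOn (fun s : ℝ => Real.exp (-((j:ℝ)+1) * s)) (Ioi 0) :=
    exp_neg_integrableOn_Ioi 0 (by positivity)
  have := hre.ofReal (𝕜 := ℂ)
  simpa [Complex.ofReal_exp, IntegrableOn] using this

lemma hankel_approx (k : ℝ → ℂ) (hk : Integrable k) {ε : ℝ} (hε : 0 < ε) :
    ∃ (m : ℕ) (c : ℕ → ℂ),
      ∫ s in Ici (0:ℝ), ‖k s - ∑ j ∈ Finset.range m, c j * Complex.exp (↑(-((j:ℝ)+1) * s))‖
        ≤ ε := by
  obtain ⟨g, hgsupp, hgL1, hgc, hgi⟩ :=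
    hk.exists_hasCompactSupport_integral_sub_le (show (0:ℝ) < ε/4 by linarith)
  -- bound on support
  obtain ⟨A, hA⟩ := hgsupp.isCompact.isBounded.subset_closedBall 0
  have hAz : ∀ s, A + 1 ≤ s → g s = 0 := by
    intro s hs
    apply image_eq_zero_of_notMem_tsupport
    intro hmem
    have := hA hmem
    rw [mem_closedBall_zero_iff] at this
    have : |s| ≤ A := this
    have h1 : s ≤ A := le_trans (le_abs_self s) this
    linarith
  set G := hankelG g with hGdef
  have hGc : Continuous G := hankelG_cont g hgc hAz
  set fRe : C(Icc (0:ℝ) 1, ℝ) :=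
    ⟨fun x => (G x).re, (Complex.continuous_re.comp hGc).comp continuous_subtype_val⟩ with hfRe
  set fIm : C(Icc (0:ℝ) 1, ℝ) :=
    ⟨fun x => (G x).im, (Complex.continuous_im.comp hGc).comp continuous_subtype_val⟩ with hfIm
  obtain ⟨p, hp⟩ := hankel_weier fRe (show (0:ℝ) < ε/8 by linarith)
  obtain ⟨q, hq⟩ := hankel_weier fIm (show (0:ℝ) < ε/8 by linarith)
  set m := max p.natDegree q.natDegree + 1 with hm
  set c : ℕ → ℂ := fun j => (p.coeff j : ℂ) + Complex.I * (q.coeff j : ℂ) with hc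
  have claim1 : ∀ x : ℝ, x ∈ Icc (0:ℝ) 1 →
      ‖G x - ∑ j ∈ Finset.range m, c j * (x:ℂ)^j‖ ≤ ε/4 := by
    intro x hx
    have hpe : p.eval x = ∑ j ∈ Finset.range m, p.coeff j * x^j :=
      Polynomial.eval_eq_sum_range' (by omega) x
    have hqe : q.eval x = ∑ j ∈ Finset.range m, q.coeff j * x^j :=
      Polynomial.eval_eq_sum_range' (by omega) x
    have hsum : ∑ j ∈ Finset.range m, c j * (x:ℂ)^j
        = ((p.eval x : ℝ) : ℂ) + Complex.I * ((q.eval x : ℝ) : ℂ) := by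
      calc ∑ j ∈ Finset.range m, c j * (x:ℂ)^j
          = ∑ j ∈ Finset.range m,
            (((p.coeff j : ℝ) : ℂ) * (x:ℂ)^j + Complex.I * (((q.coeff j : ℝ) : ℂ) * (x:ℂ)^j)) := by
            refine Finset.sum_congr rfl fun j _ => ?_
            rw [hc]; ring
        _ = (∑ j ∈ Finset.range m, ((p.coeff j : ℝ) : ℂ) * (x:ℂ)^j)
            + Complex.I * ∑ j ∈ Finset.range m, ((q.coeff j : ℝ) : ℂ) * (x:ℂ)^j := by
            rw [Finset.sum_add_distrib, Finset.mul_sum]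
        _ = ((p.eval x : ℝ) : ℂ) + Complex.I * ((q.eval x : ℝ) : ℂ) := by
            rw [hpe, hqe]
            push_cast
            ring
    rw [hsum]
    have hre : (G x - (((p.eval x : ℝ) : ℂ) + Complex.I * ((q.eval x : ℝ) : ℂ))).re
        = (G x).re - p.eval x := by simp
    have him : (G x - (((p.eval x : ℝ) : ℂ) + Complex.I * ((q.eval x : ℝ) : ℂ))).im
        = (G x).im - q.eval x := by simp
    have hb := Complex.norm_le_abs_re_add_abs_im
      (G x - (((p.eval x : ℝ) : ℂ) + Complex.I * ((q.eval x : ℝ) : ℂ)))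
    rw [hre, him] at hb
    have h1 := hp ⟨x, hx⟩
    have h2 := hq ⟨x, hx⟩
    have : ‖(G x - (((p.eval x : ℝ) : ℂ) + Complex.I * ((q.eval x : ℝ) : ℂ)))‖
        ≤ ε/8 + ε/8 := by
      refine hb.trans (add_le_add ?_ ?_)
      · exact h1
      · exact h2
    linarith
  set h : ℝ → ℂ := fun s => ∑ j ∈ Finset.range m, c j * Complex.exp (↑(-((j:ℝ)+1) * s)) with hh
  have claim2 : ∀ s : ℝ, 0 ≤ s → ‖g s - h s‖ ≤ (ε/4) * Real.exp (-s) := by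
    intro s hs
    set x := Real.exp (-s) with hx
    have hx0 : 0 < x := Real.exp_pos _
    have hx1 : x ≤ 1 := by
      rw [hx, ← Real.exp_zero]
      exact Real.exp_le_exp.mpr (by linarith)
    have hexp : ∀ j : ℕ, Complex.exp (↑(-((j:ℝ)+1) * s)) = ((x:ℂ))^(j+1) := by
      intro j
      have : Real.exp (-((j:ℝ)+1) * s) = x ^ (j+1) := by
        rw [hx, ← Real.exp_nat_mul]
        congr 1
        push_cast
        ring
      rw [← Complex.ofReal_exp, this]
      push_cast
      ring
    have hhs : h s = (x:ℂ) * ∑ j ∈ Finset.range m, c j * (x:ℂ)^j := by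
      rw [hh]
      simp only [hexp]
      rw [Finset.mul_sum]
      refine Finset.sum_congr rfl fun j _ => ?_
      ring
    have hgs : g s = G x * (x:ℂ) := by
      rw [hGdef, hankelG_eq g hx0]
      have hlog : -Real.log x = s := by rw [hx, Real.log_exp]; ring
      rw [hlog]
      have hxne : ((x:ℝ):ℂ) ≠ 0 := by exact_mod_cast hx0.ne'
      field_simp
    have : g s - h s = (G x - ∑ j ∈ Finset.range m, c j * (x:ℂ)^j) * (x:ℂ) := by
      rw [hgs, hhs]; ring
    rw [this, norm_mul]
    have hxn : ‖((x:ℝ):ℂ)‖ = x := by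
      rw [Complex.norm_real, Real.norm_eq_abs, abs_of_pos hx0]
    rw [hxn]
    have := claim1 x ⟨hx0.le, hx1⟩
    calc ‖G x - ∑ j ∈ Finset.range m, c j * (x:ℂ)^j‖ * x ≤ (ε/4) * x := by
          exact mul_le_mul_of_nonneg_right this hx0.le
      _ = (ε/4) * Real.exp (-s) := by rw [hx]
  -- integrability of h
  have hInt_h : IntegrableOn h (Ici 0) := by
    rw [hh]
    apply MeasureTheory.integrable_finset_sum
    intro j _
    exact (hankel_exp_int j).const_mul (c j)
  refine ⟨m, c, ?_⟩
  have hki : IntegrableOn k (Ici 0) := hk.integrableOn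
  have hgIci : IntegrableOn g (Ici 0) := hgi.integrableOn
  have hint1 : IntegrableOn (fun s => ‖k s - h s‖) (Ici 0) := (hki.sub hInt_h).norm
  have hint2 : IntegrableOn (fun s => ‖k s - g s‖ + ‖g s - h s‖) (Ici 0) :=
    ((hki.sub hgIci).norm.add (hgIci.sub hInt_h).norm)
  have step1 : ∫ s in Ici (0:ℝ), ‖k s - h s‖
      ≤ ∫ s in Ici (0:ℝ), (‖k s - g s‖ + ‖g s - h s‖) := by
    refine setIntegral_mono_on hint1 hint2 measurableSet_Ici fun s _ => ?_
    calc ‖k s - h s‖ = ‖(k s - g s) + (g s - h s)‖ := by ring_nf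
      _ ≤ ‖k s - g s‖ + ‖g s - h s‖ := norm_add_le _ _
  have step2 : ∫ s in Ici (0:ℝ), (‖k s - g s‖ + ‖g s - h s‖)
      = (∫ s in Ici (0:ℝ), ‖k s - g s‖) + ∫ s in Ici (0:ℝ), ‖g s - h s‖ :=
    integral_add (hki.sub hgIci).norm (hgIci.sub hInt_h).norm
  have step3 : ∫ s in Ici (0:ℝ), ‖k s - g s‖ ≤ ε/4 := by
    refine le_trans (setIntegral_le_integral (hk.sub hgi).norm ?_) hgL1
    filter_upwards with s
    exact norm_nonneg _
  have hexpint : IntegrableOn (fun s : ℝ => (ε/4) * Real.exp (-s)) (Ici 0) := by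
    rw [integrableOn_Ici_iff_integrableOn_Ioi]
    refine Integrable.const_mul ?_ _
    have := exp_neg_integrableOn_Ioi 0 (show (0:ℝ) < 1 by norm_num)
    simpa [IntegrableOn] using this
  have step4 : ∫ s in Ici (0:ℝ), ‖g s - h s‖ ≤ ε/4 := by
    have hle : ∫ s in Ici (0:ℝ), ‖g s - h s‖ ≤ ∫ s in Ici (0:ℝ), (ε/4) * Real.exp (-s) := by
      refine setIntegral_mono_on (hgIci.sub hInt_h).norm hexpint measurableSet_Ici
        fun s hs => claim2 s hs
    refine hle.trans ?_
    rw [integral_Ici_eq_integral_Ioi, integral_const_mul]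
    rw [integral_exp_neg_Ioi_zero]
    linarith
  calc ∫ s in Ici (0:ℝ), ‖k s - h s‖ ≤ _ := step1
    _ = _ := step2
    _ ≤ ε/4 + ε/4 := add_le_add step3 step4
    _ ≤ ε := by linarith

noncomputable def hankelExpFn (j : ℕ) : ℝ → ℂ := fun s => Complex.exp (↑(-((j:ℝ)+1) * s))

lemma hankelExpFn_mul (j : ℕ) (t τ : ℝ) :
    hankelExpFn j (t + τ) = hankelExpFn j t * hankelExpFn j τ := by
  unfold hankelExpFn
  rw [← Complex.exp_add]
  congr 1
  push_cast
  ring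

lemma hankelExpFn_conj (j : ℕ) (s : ℝ) : conj (hankelExpFn j s) = hankelExpFn j s := by
  unfold hankelExpFn
  rw [← Complex.exp_conj, Complex.conj_ofReal]

lemma hankelExpFn_norm (j : ℕ) (s : ℝ) : ‖hankelExpFn j s‖ = Real.exp (-((j:ℝ)+1) * s) := by
  unfold hankelExpFn
  rw [Complex.norm_exp, Complex.ofReal_re]

lemma hankelExpFn_memL2 (j : ℕ) :
    MemLp (hankelExpFn j) 2 (volume.restrict (Ici (0:ℝ))) := by
  have hcont : Continuous (hankelExpFn j) := by
    unfold hankelExpFn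
    fun_prop
  rw [memLp_two_iff_integrable_sq_norm (hcont.aestronglyMeasurable)]
  have : IntegrableOn (fun s : ℝ => Real.exp (-(2*((j:ℝ)+1)) * s)) (Ici 0) := by
    rw [integrableOn_Ici_iff_integrableOn_Ioi]
    exact exp_neg_integrableOn_Ioi 0 (by positivity)
  refine this.congr_fun ?_ measurableSet_Ici
  intro s _
  show Real.exp (-(2*((j:ℝ)+1)) * s) = ‖hankelExpFn j s‖ ^ 2
  rw [hankelExpFn_norm, ← Real.exp_nat_mul]
  congr 1
  push_cast
  ring


lemma Lp_coeFn_sum {α E : Type*} [MeasurableSpace α] {μ : Measure α} [NormedAddCommGroup E]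
    {p : ℝ≥0∞} {ι : Type*} (s : Finset ι) (f : ι → Lp E p μ) :
    ⇑(∑ i ∈ s, f i) =ᵐ[μ] fun a => ∑ i ∈ s, f i a := by
  classical
  induction s using Finset.induction_on with
  | empty => simpa [Pi.zero_def] using Lp.coeFn_zero E p μ
  | insert i s hi ih =>
    rw [Finset.sum_insert hi]
    filter_upwards [Lp.coeFn_add (f i) (∑ x ∈ s, f x), ih] with a ha hb
    rw [ha]
    simp only [Pi.add_apply, hb]
    rw [Finset.sum_insert hi]

noncomputable def hankelE (j : ℕ) : Lp ℂ 2 (volume.restrict (Ici (0:ℝ))) :=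
  (hankelExpFn_memL2 j).toLp _

noncomputable def hankelF (m : ℕ) (c : ℕ → ℂ) :
    Lp ℂ 2 (volume.restrict (Ici (0:ℝ))) →L[ℂ] Lp ℂ 2 (volume.restrict (Ici (0:ℝ))) :=
  ∑ j ∈ Finset.range m, c j • ((innerSL ℂ (hankelE j)).smulRight (hankelE j))

lemma hankelF_finrank (m : ℕ) (c : ℕ → ℂ) :
    FiniteDimensional ℂ (LinearMap.range ((hankelF m c :
      Lp ℂ 2 (volume.restrict (Ici (0:ℝ))) →ₗ[ℂ] Lp ℂ 2 (volume.restrict (Ici (0:ℝ)))))) := by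
  set S := Submodule.span ℂ (hankelE '' (Iio m))
  have hfin : FiniteDimensional ℂ S :=
    FiniteDimensional.span_of_finite ℂ ((Set.finite_Iio m).image hankelE)
  have hle : LinearMap.range ((hankelF m c :
      Lp ℂ 2 (volume.restrict (Ici (0:ℝ))) →ₗ[ℂ] Lp ℂ 2 (volume.restrict (Ici (0:ℝ))))) ≤ S := by
    rintro _ ⟨x, rfl⟩
    show hankelF m c x ∈ S
    unfold hankelF
    rw [ContinuousLinearMap.sum_apply]
    refine Submodule.sum_mem S fun j hj => ?_
    rw [ContinuousLinearMap.smul_apply, ContinuousLinearMap.smulRight_apply]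
    refine Submodule.smul_mem S _ (Submodule.smul_mem S _ ?_)
    exact Submodule.subset_span ⟨j, Finset.mem_range.1 hj, rfl⟩
  exact Submodule.finiteDimensional_of_le hle

lemma hankel_exp_mul_integrable (j : ℕ) (f : Lp ℂ 2 (volume.restrict (Ici (0:ℝ)))) :
    Integrable (fun τ => hankelExpFn j τ * f τ) (volume.restrict (Ici (0:ℝ))) := by
  have h := L2.integrable_inner (𝕜 := ℂ) (hankelE j) f
  have heq : ∀ᵐ τ ∂(volume.restrict (Ici (0:ℝ))),
      (inner ℂ (hankelE j τ) (f τ) : ℂ) = hankelExpFn j τ * f τ := by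
    filter_upwards [(hankelExpFn_memL2 j).coeFn_toLp] with τ hτ
    rw [RCLike.inner_apply]
    have hτ' : hankelE j τ = hankelExpFn j τ := hτ
    rw [hτ', hankelExpFn_conj]
    ring
  exact h.congr heq

lemma hankelE_inner (j : ℕ) (f : Lp ℂ 2 (volume.restrict (Ici (0:ℝ)))) :
    (inner ℂ (hankelE j) f : ℂ) = ∫ τ in Ici (0:ℝ), hankelExpFn j τ * f τ := by
  rw [L2.inner_def]
  refine integral_congr_ae ?_
  filter_upwards [(hankelExpFn_memL2 j).coeFn_toLp] with τ hτ
  rw [RCLike.inner_apply]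
  have hτ' : hankelE j τ = hankelExpFn j τ := hτ
  rw [hτ', hankelExpFn_conj]
  ring

lemma hankelF_rep (m : ℕ) (c : ℕ → ℂ) (f : Lp ℂ 2 (volume.restrict (Ici (0:ℝ)))) :
    ⇑(hankelF m c f) =ᵐ[volume.restrict (Ici (0:ℝ))] fun t => ∫ τ in Ici (0:ℝ),
      (∑ j ∈ Finset.range m, c j * hankelExpFn j (t + τ)) * f τ := by
  have hRHS : ∀ t : ℝ, (∫ τ in Ici (0:ℝ),
        (∑ j ∈ Finset.range m, c j * hankelExpFn j (t + τ)) * f τ)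
      = ∑ j ∈ Finset.range m, (c j * hankelExpFn j t)
          * ∫ τ in Ici (0:ℝ), hankelExpFn j τ * f τ := by
    intro t
    have hpt : ∀ τ : ℝ, (∑ j ∈ Finset.range m, c j * hankelExpFn j (t + τ)) * f τ
        = ∑ j ∈ Finset.range m, (c j * hankelExpFn j t) * (hankelExpFn j τ * f τ) := by
      intro τ
      rw [Finset.sum_mul]
      refine Finset.sum_congr rfl fun j _ => ?_
      rw [hankelExpFn_mul]
      ring
    simp_rw [hpt]
    rw [integral_finset_sum _ (fun j _ => ((hankel_exp_mul_integrable j f).const_mul _))]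
    exact Finset.sum_congr rfl fun j _ => integral_const_mul _ _
  have hg : ∀ j ∈ Finset.range m,
      ⇑((c j • ((innerSL ℂ (hankelE j)).smulRight (hankelE j))) f)
        =ᵐ[volume.restrict (Ici (0:ℝ))]
      fun a => (c j * (inner ℂ (hankelE j) f : ℂ)) * hankelExpFn j a := by
    intro j _
    have h1 : (c j • ((innerSL ℂ (hankelE j)).smulRight (hankelE j))) f
        = (c j * (inner ℂ (hankelE j) f : ℂ)) • hankelE j := by
      rw [ContinuousLinearMap.smul_apply, ContinuousLinearMap.smulRight_apply, innerSL_apply_apply,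
        smul_smul]
    rw [h1]
    filter_upwards [Lp.coeFn_smul (c j * (inner ℂ (hankelE j) f : ℂ)) (hankelE j),
      (hankelExpFn_memL2 j).coeFn_toLp] with a ha hb
    rw [ha]
    simp only [Pi.smul_apply, smul_eq_mul]
    have hb' : hankelE j a = hankelExpFn j a := hb
    rw [hb']
  have hsum := Lp_coeFn_sum (Finset.range m)
    (fun j => (c j • ((innerSL ℂ (hankelE j)).smulRight (hankelE j))) f)
  have hall : ∀ᵐ a ∂(volume.restrict (Ici (0:ℝ))), ∀ j ∈ Finset.range m,
      ((c j • ((innerSL ℂ (hankelE j)).smulRight (hankelE j))) f) a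
        = (c j * (inner ℂ (hankelE j) f : ℂ)) * hankelExpFn j a :=
    (ae_ball_iff (Finset.range m).countable_toSet).2 fun j hj => (hg j hj)
  have happ : ⇑(hankelF m c f)
      =ᵐ[volume.restrict (Ici (0:ℝ))]
      ⇑(∑ j ∈ Finset.range m, (c j • ((innerSL ℂ (hankelE j)).smulRight (hankelE j))) f) := by
    unfold hankelF
    rw [ContinuousLinearMap.sum_apply]
  filter_upwards [happ, hsum, hall] with a h1 h2 h3
  rw [h1, h2, hRHS]
  refine Finset.sum_congr rfl fun j hj => ?_
  rw [h3 j hj, hankelE_inner]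
  ring

lemma hankelExpFn_cont (j : ℕ) : Continuous (hankelExpFn j) := by
  unfold hankelExpFn; fun_prop

/-- The Hankel operator `(H f)(t) = ∫₀^∞ k(t+τ) f(τ) dτ` with `k ∈ L¹(ℝ₊)` is the
limit in operator norm of a sequence of finite-rank operators. -/
theorem stmt8 (k : ℝ → ℂ) (hk : Integrable k) (hks : ∀ t < (0 : ℝ), k t = 0)
    (H : Lp ℂ 2 (volume.restrict (Ici (0:ℝ))) →L[ℂ] Lp ℂ 2 (volume.restrict (Ici (0:ℝ))))
    (hH : ∀ f : Lp ℂ 2 (volume.restrict (Ici (0:ℝ))),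
      ⇑(H f) =ᵐ[volume.restrict (Ici (0:ℝ))]
        fun t => ∫ τ in Ici (0:ℝ), k (t + τ) * f τ) :
    ∃ F : ℕ → (Lp ℂ 2 (volume.restrict (Ici (0:ℝ))) →L[ℂ]
        Lp ℂ 2 (volume.restrict (Ici (0:ℝ)))),
      (∀ n, FiniteDimensional ℂ (LinearMap.range ((F n : Lp ℂ 2 (volume.restrict (Ici (0:ℝ))) →ₗ[ℂ]
        Lp ℂ 2 (volume.restrict (Ici (0:ℝ))))))) ∧
      Tendsto (fun n => ‖H - F n‖) atTop (nhds 0) := by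
  set k' : ℝ → ℂ := hk.1.mk k with hk'def
  have hk'sm : StronglyMeasurable k' := hk.1.stronglyMeasurable_mk
  have hkk' : k =ᵐ[volume] k' := hk.1.ae_eq_mk
  have hk'i : Integrable k' := hk.congr hkk'
  -- translation invariance of the a.e. equality
  have htrans : ∀ t : ℝ, (fun τ => k (t + τ)) =ᵐ[volume] fun τ => k' (t + τ) := by
    intro t
    exact (measurePreserving_add_left volume t).quasiMeasurePreserving.ae_eq_comp hkk'
  have key : ∀ n : ℕ, ∃ F : Lp ℂ 2 (volume.restrict (Ici (0:ℝ))) →L[ℂ]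
      Lp ℂ 2 (volume.restrict (Ici (0:ℝ))),
      (FiniteDimensional ℂ (LinearMap.range ((F : Lp ℂ 2 (volume.restrict (Ici (0:ℝ))) →ₗ[ℂ]
        Lp ℂ 2 (volume.restrict (Ici (0:ℝ))))))) ∧ ‖H - F‖ ≤ 1/((n:ℝ)+1) := by
    intro n
    have hεpos : (0:ℝ) < 1/((n:ℝ)+1) := by positivity
    obtain ⟨m, c, hmc⟩ := hankel_approx k hk hεpos
    set h : ℝ → ℂ := fun s => ∑ j ∈ Finset.range m, c j * hankelExpFn j s with hhdef
    have hmc' : ∫ s in Ici (0:ℝ), ‖k s - h s‖ ≤ 1/((n:ℝ)+1) := hmc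
    have hInt_h : IntegrableOn h (Ici 0) := by
      apply MeasureTheory.integrable_finset_sum
      intro j _
      exact (hankel_exp_int j).const_mul (c j)
    have hhc : Continuous h := continuous_finset_sum _ fun j _ =>
      continuous_const.mul (hankelExpFn_cont j)
    set g : ℝ → ℂ := fun s => k' s - h s with hgdef
    have hgsm : StronglyMeasurable g := hk'sm.sub hhc.stronglyMeasurable
    have hgi : IntegrableOn g (Ici 0) := hk'i.integrableOn.sub hInt_h
    set C : ℝ := ∫ s in Ici (0:ℝ), ‖g s‖ with hCdef
    have hC0 : 0 ≤ C := integral_nonneg fun s => norm_nonneg _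
    have hCε : C ≤ 1/((n:ℝ)+1) := by
      have : ∫ s in Ici (0:ℝ), ‖g s‖ = ∫ s in Ici (0:ℝ), ‖k s - h s‖ := by
        refine integral_congr_ae ?_
        filter_upwards [ae_restrict_of_ae hkk'] with s hs
        rw [hgdef]
        simp only [hs]
      rw [hCdef, this]
      exact hmc'
    have hlC : (∫⁻ s in Ici (0:ℝ), (‖g s‖₊ : ℝ≥0∞)) = ENNReal.ofReal C := by
      rw [hCdef, ofReal_integral_norm_eq_lintegral_enorm hgi]
      rfl
    refine ⟨hankelF m c, hankelF_finrank m c, ?_⟩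
    have hop : ‖H - hankelF m c‖ ≤ C := by
      refine ContinuousLinearMap.opNorm_le_bound _ hC0 fun f => ?_
      have hfsm : StronglyMeasurable ⇑f := AEEqFun.stronglyMeasurable _
      have hf2 : MemLp ⇑f 2 (volume.restrict (Ici (0:ℝ))) := Lp.memLp f
      obtain ⟨haeint, hmem, hbnd⟩ := hankel_schur g ⇑f hgsm hgi hfsm hf2
      obtain ⟨haeint', -, -⟩ := hankel_schur k' ⇑f hk'sm hk'i.integrableOn hfsm hf2
      have hInt_hf : ∀ t : ℝ, Integrable (fun τ => h (t + τ) * f τ) (volume.restrict (Ici (0:ℝ))) := by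
        intro t
        have heq : ∀ τ : ℝ, h (t + τ) * f τ
            = ∑ j ∈ Finset.range m, (c j * hankelExpFn j t) * (hankelExpFn j τ * f τ) := by
          intro τ
          rw [hhdef]
          rw [Finset.sum_mul]
          refine Finset.sum_congr rfl fun j _ => ?_
          rw [hankelExpFn_mul]
          ring
        simp_rw [heq]
        exact MeasureTheory.integrable_finset_sum _
          fun j _ => (hankel_exp_mul_integrable j f).const_mul _
      have hkint : ∀ t : ℝ, (∫ τ in Ici (0:ℝ), k (t + τ) * f τ)
          = ∫ τ in Ici (0:ℝ), k' (t + τ) * f τ := by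
        intro t
        refine integral_congr_ae ?_
        filter_upwards [ae_restrict_of_ae (htrans t)] with τ hτ
        rw [hτ]
      have hrep : ⇑((H - hankelF m c) f) =ᵐ[(volume.restrict (Ici (0:ℝ)))]
          fun t => ∫ τ in Ici (0:ℝ), g (t + τ) * f τ := by
        have hsub : (H - hankelF m c) f = H f - hankelF m c f := rfl
        rw [hsub]
        filter_upwards [Lp.coeFn_sub (H f) (hankelF m c f), hH f, hankelF_rep m c f,
          haeint'] with t h1 h2 h3 hint'
        rw [h1]
        simp only [Pi.sub_apply]
        rw [h2, h3, hkint t]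
        have : ∫ τ in Ici (0:ℝ), g (t + τ) * f τ
            = (∫ τ in Ici (0:ℝ), k' (t + τ) * f τ) - ∫ τ in Ici (0:ℝ), h (t + τ) * f τ := by
          rw [← integral_sub hint' (hInt_hf t)]
          refine integral_congr_ae (Filter.Eventually.of_forall fun τ => ?_)
          rw [hgdef]
          ring
        rw [this]
      have hRHSne : (∫⁻ s in Ici (0:ℝ), (‖g s‖₊ : ℝ≥0∞)) * eLpNorm (⇑f) 2 (volume.restrict (Ici (0:ℝ))) ≠ ⊤ :=
        ENNReal.mul_ne_top hgi.2.ne hf2.2.ne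
      calc ‖(H - hankelF m c) f‖
          = (eLpNorm (⇑((H - hankelF m c) f)) 2 (volume.restrict (Ici (0:ℝ)))).toReal := Lp.norm_def _
        _ = (eLpNorm (fun t => ∫ τ in Ici (0:ℝ), g (t + τ) * f τ) 2 (volume.restrict (Ici (0:ℝ)))).toReal := by
            rw [eLpNorm_congr_ae hrep]
        _ ≤ (((∫⁻ s in Ici (0:ℝ), (‖g s‖₊ : ℝ≥0∞))) * eLpNorm (⇑f) 2 (volume.restrict (Ici (0:ℝ)))).toReal :=
            ENNReal.toReal_mono hRHSne hbnd
        _ = C * ‖f‖ := by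
            rw [ENNReal.toReal_mul, hlC, ENNReal.toReal_ofReal hC0, ← Lp.norm_def]
    exact hop.trans hCε
  choose F hF1 hF2 using key
  refine ⟨F, hF1, ?_⟩
  refine squeeze_zero (fun n => norm_nonneg _) hF2 ?_
  exact tendsto_one_div_add_atTop_nhds_zero_nat
end
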